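/- Let G be a finite simple graph with an equitable partition π whose quotient matrix Q has exactly r distinct eigenvalues. Then G has at most r main eigenvalues. -/

import Mathlib

open Matrix

def SimpleGraph.IsMainEigenvalue {V : Type*} [Fintype V] [DecidableEq V]
    (G : SimpleGraph V) [DecidableRel G.Adj] (μ : ℝ) : Prop :=
  ∃ x : V → ℝ, x ≠ 0 ∧ (G.adjMatrix ℝ).mulVec x = μ • x ∧ x ⬝ᵥ (fun _ => (1 : ℝ)) ≠ 0

theorem stmt_4 {V : Type*} [Fintype V] [DecidableEq V]
    (G : SimpleGraph V) [DecidableRel G.Adj]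
    (t : ℕ) (p : V → Fin t) (hsurj : Function.Surjective p)
    (Q : Matrix (Fin t) (Fin t) ℕ)
    (heq : ∀ v : V, ∀ j : Fin t,
      ((G.neighborFinset v).filter (fun w => p w = j)).card = Q (p v) j)
    (r : ℕ)
    (hr : {μ : ℝ | ∃ x : Fin t → ℝ, x ≠ 0 ∧ (Q.map (Nat.cast : ℕ → ℝ)).mulVec x = μ • x}.ncard = r) :
    {μ : ℝ | G.IsMainEigenvalue μ}.ncard ≤ r := by
  classical
  set M : Matrix (Fin t) (Fin t) ℝ := Q.map (Nat.cast : ℕ → ℝ) with hMdef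
  have hfin : {μ : ℝ | ∃ x : Fin t → ℝ, x ≠ 0 ∧ M.mulVec x = μ • x}.Finite := by
    apply (Module.End.finite_hasEigenvalue (R := ℝ) (M := Fin t → ℝ) M.mulVecLin).subset
    rintro μ ⟨x, hx0, hx⟩
    exact Module.End.hasEigenvalue_of_hasEigenvector
      ⟨Module.End.mem_eigenspace_iff.2 (by simpa using hx), hx0⟩
  rw [← hr]
  apply Set.ncard_le_ncard _ hfin
  rintro μ ⟨x, hx0, hAx, hxj⟩
  set φ : Fin t → ℝ := fun j => ∑ v, if p v = j then x v else 0 with hφdef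
  have hφ0 : φ ≠ 0 := by
    intro h
    apply hxj
    have hsum : ∑ j, φ j = ∑ v, x v := by
      rw [hφdef, Finset.sum_comm]
      simp
    rw [h] at hsum
    simp only [Pi.zero_apply, Finset.sum_const_zero] at hsum
    simpa [dotProduct] using hsum.symm
  have key : ∀ j, ∑ i, φ i * M i j = μ * φ j := by
    intro j
    have hcount : ∀ w : V, (∑ v, if p v = j then (G.adjMatrix ℝ) v w else 0) = M (p w) j := by
      intro w
      have h1 : (∑ v, if p v = j then (G.adjMatrix ℝ) v w else 0)
          = ((Finset.univ.filter (fun v => p v = j ∧ G.Adj v w)).card : ℝ) := by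
        rw [Finset.card_filter]
        push_cast
        apply Finset.sum_congr rfl
        intro v _
        by_cases h : p v = j <;> by_cases h' : G.Adj v w <;>
          simp [h, h', SimpleGraph.adjMatrix]
      have h2 : Finset.univ.filter (fun v => p v = j ∧ G.Adj v w)
          = (G.neighborFinset w).filter (fun v => p v = j) := by
        ext v
        simp [SimpleGraph.mem_neighborFinset, and_comm, G.adj_comm]
      rw [h1, h2, heq w j]
      simp [hMdef]
    calc ∑ i, φ i * M i j = ∑ i, ∑ v, (if p v = i then x v * M i j else 0) := by
          apply Finset.sum_congr rfl; intro i _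
          rw [hφdef, Finset.sum_mul]
          apply Finset.sum_congr rfl; intro v _
          by_cases h : p v = i <;> simp [h]
      _ = ∑ v, ∑ i, (if p v = i then x v * M i j else 0) := Finset.sum_comm
      _ = ∑ v, x v * M (p v) j := by
          apply Finset.sum_congr rfl; intro v _
          simp
      _ = ∑ w, (∑ v, if p v = j then (G.adjMatrix ℝ) v w else 0) * x w := by
          apply Finset.sum_congr rfl; intro w _
          rw [hcount w, mul_comm]
      _ = ∑ w, ∑ v, (if p v = j then (G.adjMatrix ℝ) v w * x w else 0) := by
          apply Finset.sum_congr rfl; intro w _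
          rw [Finset.sum_mul]
          apply Finset.sum_congr rfl; intro v _
          by_cases h : p v = j <;> simp [h]
      _ = ∑ v, ∑ w, (if p v = j then (G.adjMatrix ℝ) v w * x w else 0) := Finset.sum_comm
      _ = ∑ v, (if p v = j then (G.adjMatrix ℝ).mulVec x v else 0) := by
          apply Finset.sum_congr rfl; intro v _
          by_cases h : p v = j <;> simp [h, mulVec, dotProduct]
      _ = ∑ v, (if p v = j then μ * x v else 0) := by
          rw [hAx]
          apply Finset.sum_congr rfl; intro v _
          by_cases h : p v = j <;> simp [h]
      _ = μ * φ j := by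
          rw [hφdef, Finset.mul_sum]
          apply Finset.sum_congr rfl; intro v _
          by_cases h : p v = j <;> simp [h]
  have hdet : (M - μ • 1).det = 0 := by
    rw [← Matrix.det_transpose, ← Matrix.exists_mulVec_eq_zero_iff]
    refine ⟨φ, hφ0, ?_⟩
    ext j
    simp only [transpose_sub, transpose_smul, transpose_one, sub_mulVec,
      Matrix.smul_mulVec, Matrix.one_mulVec, Pi.sub_apply, Pi.smul_apply,
      Pi.zero_apply, smul_eq_mul]
    rw [sub_eq_zero]
    have : Mᵀ.mulVec φ j = ∑ i, φ i * M i j := by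
      simp [mulVec, dotProduct, mul_comm]
    rw [this, key j]
  obtain ⟨y, hy0, hy⟩ := Matrix.exists_mulVec_eq_zero_iff.mpr hdet
  refine ⟨y, hy0, ?_⟩
  have := hy
  rw [sub_mulVec, Matrix.smul_mulVec, Matrix.one_mulVec, sub_eq_zero] at this
  exact this
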